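/- Let C be a set of (variable,color) pairs in a (4,2)-CSP instance involving exactly four distinct variables, each pair having exactly three constraints all going to pairs within C, and C connected under the constraint relation. Then |C| is a multiple of four and each of the four variables contributes exactly |C|/4 pairs to C. -/

import Mathlib

/-- A binary constraint satisfaction instance: each variable has a set of allowed colors,
and each constraint forbids one specific pair of (variable,color) choices from occurring
simultaneously. -/
structure CSP (V C : Type) where
  allowed : V → Set C
  constraints : Set ((V × C) × (V × C))

/-- `f` is a solution: it picks an allowed color for every variable and violates no
constraint. -/
def CSP.Satisfies {V C : Type} (I : CSP V C) (f : V → C) : Prop :=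
  (∀ v, f v ∈ I.allowed v) ∧
  ∀ pq ∈ I.constraints, ¬(f pq.1.1 = pq.1.2 ∧ f pq.2.1 = pq.2.2)

/-- An instance is solvable if it has a solution. -/
def CSP.Solvable {V C : Type} (I : CSP V C) : Prop := ∃ f, I.Satisfies f

open Classical in
/-- Auxiliary: pick a neighbor of `p` at variable `w`, if one exists. -/
noncomputable def nbAux {V C : Type} (R : V × C → V × C → Prop) (p : V × C) (w : V) : V × C :=
  if h : ∃ q, R p q ∧ q.1 = w then h.choose else p

lemma nbAux_spec {V C : Type} {R : V × C → V × C → Prop} {p : V × C} {w : V}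
    (h : ∃ q, R p q ∧ q.1 = w) : R p (nbAux R p w) ∧ (nbAux R p w).1 = w := by
  unfold nbAux
  rw [dif_pos h]
  exact h.choose_spec

/-- A small three-component of a (4,2)-CSP instance: a constraint-connected set `S` of
(variable,color) pairs on exactly four distinct variables, each pair having exactly three
constraints, all going to pairs within `S` on distinct variables different from its own.
Then `|S|` is a multiple of 4 and each of the four variables contributes exactly `|S|/4`
pairs. -/
theorem stmt16 {V C : Type} (I : CSP V C)
    (h4 : ∀ u, (I.allowed u).ncard ≤ 4)
    (S : Set (V × C)) (hfin : S.Finite)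
    (hvars : (Prod.fst '' S).ncard = 4)
    (hinS : ∀ p ∈ S, ∀ q : V × C, ((p, q) ∈ I.constraints ∨ (q, p) ∈ I.constraints) →
      q ∈ S ∧ q.1 ≠ p.1)
    (hthree : ∀ p ∈ S,
      {q : V × C | (p, q) ∈ I.constraints ∨ (q, p) ∈ I.constraints}.ncard = 3)
    (huniq : ∀ p ∈ S, ∀ q₁ q₂ : V × C,
      ((p, q₁) ∈ I.constraints ∨ (q₁, p) ∈ I.constraints) →
      ((p, q₂) ∈ I.constraints ∨ (q₂, p) ∈ I.constraints) → q₁.1 = q₂.1 → q₁ = q₂)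
    (hconn : ∀ p ∈ S, ∀ q ∈ S,
      Relation.ReflTransGen
        (fun x y : V × C => (x, y) ∈ I.constraints ∨ (y, x) ∈ I.constraints) p q) :
    ∃ j : ℕ, S.ncard = 4 * j ∧ ∀ u ∈ Prod.fst '' S, {p ∈ S | p.1 = u}.ncard = j := by
  classical
  set R : V × C → V × C → Prop :=
    fun x y => (x, y) ∈ I.constraints ∨ (y, x) ∈ I.constraints with hRdef
  have hVfin : (Prod.fst '' S).Finite := hfin.image _
  -- for every p ∈ S and variable w ≠ p.1 there is a neighbor of p at variable w
  have lemA : ∀ p ∈ S, ∀ w ∈ Prod.fst '' S, w ≠ p.1 → ∃ q, R p q ∧ q.1 = w := by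
    intro p hp w hw hne
    have hN3 : {q | R p q}.ncard = 3 := hthree p hp
    have hinj : Set.InjOn Prod.fst {q | R p q} := by
      intro q₁ h₁ q₂ h₂ h
      exact huniq p hp q₁ q₂ h₁ h₂ h
    have himg : Prod.fst '' {q | R p q} ⊆ (Prod.fst '' S) \ {p.1} := by
      rintro w' ⟨q, hq, rfl⟩
      obtain ⟨hqS, hq1⟩ := hinS p hp q hq
      rw [Set.mem_diff]
      exact ⟨⟨q, hqS, rfl⟩, by simpa using hq1⟩
    have hc1 : (Prod.fst '' {q | R p q}).ncard = 3 := by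
      rw [Set.ncard_image_of_injOn hinj, hN3]
    have hc2 : ((Prod.fst '' S) \ {p.1}).ncard = 3 := by
      rw [Set.ncard_diff_singleton_of_mem (Set.mem_image_of_mem Prod.fst hp), hvars]
    have heq : Prod.fst '' {q | R p q} = (Prod.fst '' S) \ {p.1} :=
      Set.eq_of_subset_of_ncard_le himg (by rw [hc1, hc2]) hVfin.diff
    have hwmem : w ∈ Prod.fst '' {q | R p q} := heq ▸ ⟨hw, hne⟩
    obtain ⟨q, hq, rfl⟩ := hwmem
    exact ⟨q, hq, rfl⟩
  set T := hfin.toFinset with hT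
  set Vs := T.image Prod.fst with hVsdef
  have hmemT : ∀ p, p ∈ T ↔ p ∈ S := fun p => hfin.mem_toFinset
  have hVs : (Vs : Set V) = Prod.fst '' S := by
    rw [hVsdef, Finset.coe_image, hT, Set.Finite.coe_toFinset]
  have hVscard : Vs.card = 4 := by
    rw [← hvars, ← hVs, Set.ncard_coe_finset]
  have hmemVs : ∀ u, u ∈ Vs ↔ u ∈ Prod.fst '' S := by
    intro u
    rw [← Finset.mem_coe, hVs]
  have key : ∀ u ∈ Vs, ∀ w ∈ Vs,
      (T.filter (fun p => p.1 = u)).card = (T.filter (fun p => p.1 = w)).card := by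
    intro u hu w hw
    rcases eq_or_ne u w with rfl | hne
    · rfl
    have step : ∀ a b : V, a ∈ Vs → b ∈ Vs → a ≠ b →
        ∀ p ∈ T.filter (fun p => p.1 = a),
        nbAux R p b ∈ T.filter (fun p => p.1 = b) ∧ nbAux R (nbAux R p b) a = p := by
      intro a b ha hb hab p hp
      rw [Finset.mem_filter, hmemT] at hp
      obtain ⟨hpS, hpa⟩ := hp
      have hbv : b ∈ Prod.fst '' S := (hmemVs b).1 hb
      have hav : a ∈ Prod.fst '' S := (hmemVs a).1 ha
      have hne1 : b ≠ p.1 := by rw [hpa]; exact hab.symm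
      obtain ⟨hR1, h1⟩ := nbAux_spec (lemA p hpS b hbv hne1)
      have hqS : nbAux R p b ∈ S := (hinS p hpS (nbAux R p b) hR1).1
      constructor
      · rw [Finset.mem_filter, hmemT]; exact ⟨hqS, h1⟩
      · have hne2 : a ≠ (nbAux R p b).1 := by rw [h1]; exact hab
        obtain ⟨hR2, h2⟩ := nbAux_spec (lemA (nbAux R p b) hqS a hav hne2)
        exact huniq (nbAux R p b) hqS (nbAux R (nbAux R p b) a) p hR2 (Or.symm hR1)
          (by rw [h2, hpa])
    exact Finset.card_bij' (fun p _ => nbAux R p w) (fun q _ => nbAux R q u)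
      (fun p hp => (step u w hu hw hne p hp).1)
      (fun q hq => (step w u hw hu hne.symm q hq).1)
      (fun p hp => (step u w hu hw hne p hp).2)
      (fun q hq => (step w u hw hu hne.symm q hq).2)
  obtain ⟨u0, hu0⟩ : Vs.Nonempty := by
    rw [← Finset.card_pos, hVscard]; norm_num
  refine ⟨(T.filter (fun p => p.1 = u0)).card, ?_, ?_⟩
  · have hsum : T.card = ∑ u ∈ Vs, (T.filter (fun p => p.1 = u)).card :=
      Finset.card_eq_sum_card_fiberwise (fun p hp => Finset.mem_image_of_mem _ hp)
    rw [Set.ncard_eq_toFinset_card S hfin, ← hT, hsum,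
      Finset.sum_congr rfl (fun u hu => key u hu u0 hu0), Finset.sum_const, hVscard,
      smul_eq_mul]
  · intro u hu
    have huVs : u ∈ Vs := (hmemVs u).2 hu
    have hset : {p ∈ S | p.1 = u} = ↑(T.filter (fun p => p.1 = u)) := by
      ext p
      simp only [Finset.coe_filter, Set.mem_setOf_eq, Finset.mem_filter, hmemT]
    rw [hset, Set.ncard_coe_finset]
    exact key u huVs u0 hu0
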